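/- Let P be a set of n ≥ 4 points in convex position in the plane, n even. Then any family of pairwise edge-disjoint plane perfect matchings on P that are additionally pairwise non-crossing (no edge of one crosses an edge of another) has size at most 2. -/

import Mathlib

noncomputable section

/-- Points of the Euclidean plane. -/
abbrev Pt : Type := EuclideanSpace ℝ (Fin 2)

/-- Two straight segments *cross* if they share a point interior to both. -/
def SegCross (a b c d : Pt) : Prop :=
  (openSegment ℝ a b ∩ openSegment ℝ c d).Nonempty

/-- Two edges (unordered pairs of points) cross. -/
def EdgesCross (e f : Sym2 Pt) : Prop :=
  ∃ a b c d : Pt, e = s(a, b) ∧ f = s(c, d) ∧ SegCross a b c d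

/-- `M` is a perfect matching on the point set `P`: a set of non-degenerate edges with
endpoints in `P` such that every point of `P` lies in exactly one edge. -/
def IsPerfMatch (P : Set Pt) (M : Set (Sym2 Pt)) : Prop :=
  (∀ e ∈ M, ¬ e.IsDiag ∧ ∀ x ∈ e, x ∈ P) ∧ ∀ x ∈ P, ∃! e, e ∈ M ∧ x ∈ e

/-- A plane (non-crossing) perfect matching on `P`. -/
def IsPlaneMatch (P : Set Pt) (M : Set (Sym2 Pt)) : Prop :=
  IsPerfMatch P M ∧ M.Pairwise fun e f => ¬ EdgesCross e f

/-- `P` is in convex position: every point of `P` is a vertex of the convex hull. -/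
def ConvexPosition (P : Set Pt) : Prop :=
  ∀ x ∈ P, x ∉ convexHull ℝ (P \ {x})

/-- No three points of `P` are collinear. -/
def NoThreeCollinear (P : Set Pt) : Prop :=
  ∀ x ∈ P, ∀ y ∈ P, ∀ z ∈ P, x ≠ y → x ≠ z → y ≠ z →
    ¬ Collinear ℝ ({x, y, z} : Set Pt)

/-- `e` is an edge of the convex hull of `P`: its endpoints are distinct points of `P` and
the segment joining them lies on the boundary of the convex hull of `P`. -/
def IsHullEdge (P : Set Pt) (e : Sym2 Pt) : Prop :=
  ∃ a b : Pt, e = s(a, b) ∧ a ∈ P ∧ b ∈ P ∧ a ≠ b ∧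
    segment ℝ a b ⊆ frontier (convexHull ℝ P)

namespace NCX
def o (a b c : Pt) : ℝ := (b 0 - a 0) * (c 1 - a 1) - (b 1 - a 1) * (c 0 - a 0)
lemma o_swap23 (a b c : Pt) : o a b c = -o a c b := by simp only [o]; ring
lemma o_swap12 (a b c : Pt) : o a b c = -o b a c := by simp only [o]; ring
lemma o_rot (a b c : Pt) : o a b c = o b c a := by simp only [o]; ring
lemma o_self2 (a b : Pt) : o a b a = 0 := by simp only [o]; ring
lemma o_self3 (a b : Pt) : o a b b = 0 := by simp only [o]; ring
lemma o_affine (a b p q : Pt) (u v : ℝ) (h : u + v = 1) :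
    o a b (u • p + v • q) = u * o a b p + v * o a b q := by
  have hv : v = 1 - u := by linarith
  subst hv
  simp only [o, PiLp.add_apply, PiLp.smul_apply, smul_eq_mul]; ring
lemma coord_ne {a b : Pt} (h : a ≠ b) : b 0 - a 0 ≠ 0 ∨ b 1 - a 1 ≠ 0 := by
  by_contra hc
  push_neg at hc
  refine h ?_
  ext i
  fin_cases i
  · show a 0 = b 0; linarith [hc.1]
  · show a 1 = b 1; linarith [hc.2]
lemma line_param {a b p : Pt} (hab : a ≠ b) (h : o a b p = 0) :
    ∃ s : ℝ, p = (1 - s) • a + s • b := by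
  have key : ∀ s : ℝ, p 0 = (1-s) * a 0 + s * b 0 → p 1 = (1-s) * a 1 + s * b 1 →
      p = (1-s) • a + s • b := by
    intro s h0 h1
    ext i
    fin_cases i
    · simpa [PiLp.add_apply, PiLp.smul_apply, smul_eq_mul] using h0
    · simpa [PiLp.add_apply, PiLp.smul_apply, smul_eq_mul] using h1
  simp only [o] at h
  rcases coord_ne hab with hd | hd
  · exact ⟨(p 0 - a 0)/(b 0 - a 0), key _ (by field_simp; ring) (by field_simp; nlinarith [h])⟩
  · exact ⟨(p 1 - a 1)/(b 1 - a 1), key _ (by field_simp; nlinarith [h]) (by field_simp; ring)⟩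

/-- straddle gives a point of the line on the open segment -/
lemma straddle_point {a b c d : Pt} (hc : 0 < o a b c) (hd : o a b d < 0) :
    ∃ p ∈ openSegment ℝ c d, o a b p = 0 := by
  set A := o a b c with hA
  set B := o a b d with hB
  have hAB : 0 < A - B := by linarith
  refine ⟨(1 - A/(A-B)) • c + (A/(A-B)) • d, ⟨1 - A/(A-B), A/(A-B), ?_, ?_, by ring, rfl⟩, ?_⟩
  · rw [sub_pos, div_lt_one hAB]; linarith
  · positivity
  · rw [o_affine _ _ _ _ _ _ (by ring)]
    field_simp
    ring

/-- if x ∈ P lies in the open segment of p (in hull) and z ∈ P, contradiction -/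
lemma not_openSegment_hull {P : Set Pt} (hconv : ConvexPosition P) {x z p : Pt}
    (hx : x ∈ P) (hz : z ∈ P) (hzx : z ≠ x) (hp : p ∈ convexHull ℝ P)
    (hmem : x ∈ openSegment ℝ p z) : False := by
  obtain ⟨α, β, hα, hβ, hαβ, heq⟩ := hmem
  have hPx : P = insert x (P \ {x}) := by
    rw [Set.insert_diff_singleton, Set.insert_eq_self.mpr hx]
  have hne : (P \ {x}).Nonempty := ⟨z, hz, hzx⟩
  rw [hPx, convexHull_insert hne] at hp
  rw [mem_convexJoin] at hp
  obtain ⟨x', hx', w, hw, hseg⟩ := hp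
  rw [Set.mem_singleton_iff] at hx'
  rw [hx'] at hseg
  obtain ⟨r, t, hr, ht, hrt, hp'⟩ := hseg
  -- x = α • p + β • z, p = r • x + t • w
  rw [← hp'] at heq
  have h5 : (α*t) • w + β • z = (1 - α*r) • x := by
    linear_combination (norm := module) heq
  have hαr : 1 - α * r ≠ 0 := by nlinarith
  have hxseg : x ∈ segment ℝ w z := by
    refine ⟨(1-α*r)⁻¹ * (α*t), (1-α*r)⁻¹ * β, ?_, ?_, ?_, ?_⟩
    · have : 0 < 1 - α*r := by
        rcases lt_or_eq_of_le (by nlinarith : 1 - α*r ≥ 0) with h | h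
        · linarith
        · exact absurd h.symm hαr
      positivity
    · have : 0 < 1 - α*r := lt_of_le_of_ne (by nlinarith) (Ne.symm hαr)
      positivity
    · field_simp
      nlinarith
    · have hh : ((1-α*r)⁻¹) • ((α*t) • w + β • z) = x := by
        rw [h5, smul_smul, inv_mul_cancel₀ hαr, one_smul]
      rw [← hh]
      match_scalars <;> ring
  have : x ∈ convexHull ℝ (P \ {x}) := by
    refine (convex_convexHull ℝ _).segment_subset ?_ ?_ hxseg
    · exact hw
    · exact subset_convexHull ℝ _ ⟨hz, hzx⟩
  exact hconv x hx this

/-- three distinct points of P are not collinear (o ≠ 0) -/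
lemma o_ne_zero {P : Set Pt} (hconv : ConvexPosition P) {x y z : Pt}
    (hx : x ∈ P) (hy : y ∈ P) (hz : z ∈ P) (hxy : x ≠ y) (hxz : x ≠ z) (hyz : y ≠ z) :
    o x y z ≠ 0 := by
  intro h0
  obtain ⟨s, hs⟩ := line_param hxy h0
  rcases le_or_gt s 0 with hs0 | hs0
  · rcases eq_or_lt_of_le hs0 with h | h
    · subst h
      simp at hs
      exact hxz hs.symm
    · -- s < 0 : x ∈ openSegment z y
      have h1s : (0:ℝ) < 1 - s := by linarith
      have h1s' : (1:ℝ) - s ≠ 0 := ne_of_gt h1s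
      have hmem : x ∈ openSegment ℝ z y := by
        refine ⟨(1-s)⁻¹, -s * (1-s)⁻¹, inv_pos.mpr h1s,
          mul_pos (by linarith : (0:ℝ) < -s) (inv_pos.mpr h1s), by field_simp; ring, ?_⟩
        rw [hs]
        match_scalars <;> field_simp <;> ring
      exact not_openSegment_hull hconv hx hy hxy.symm (subset_convexHull ℝ P hz) hmem
  · rcases le_or_gt s 1 with hs1 | hs1
    · -- z ∈ segment x y
      have : z ∈ convexHull ℝ (P \ {z}) := by
        have hx' : x ∈ P \ {z} := ⟨hx, by simpa using hxz⟩
        have hy' : y ∈ P \ {z} := ⟨hy, by simpa using hyz⟩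
        refine segment_subset_convexHull hx' hy' ?_
        exact ⟨1-s, s, by linarith, by linarith, by ring, hs.symm⟩
      exact hconv z hz this
    · -- s > 1 : y ∈ openSegment x z
      have hspos : (0:ℝ) < s := by linarith
      have hsne : s ≠ 0 := ne_of_gt hspos
      have hmem : y ∈ openSegment ℝ x z := by
        refine ⟨1 - s⁻¹, s⁻¹, ?_, inv_pos.mpr hspos, by ring, ?_⟩
        · rw [sub_pos]
          rw [inv_lt_one_iff₀]
          right; linarith
        · rw [hs]
          match_scalars <;> field_simp <;> ring
      exact not_openSegment_hull hconv hy hz hyz.symm (subset_convexHull ℝ P hx) hmem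

/-- line through two vertices meets the hull only in the segment -/
lemma hull_inter_line {P : Set Pt} (hconv : ConvexPosition P) {a b p : Pt}
    (ha : a ∈ P) (hb : b ∈ P) (hab : a ≠ b) (hp : p ∈ convexHull ℝ P)
    (h0 : o a b p = 0) : p ∈ segment ℝ a b := by
  obtain ⟨s, hs⟩ := line_param hab h0
  rcases le_or_gt s 0 with hs0 | hs0
  · rcases eq_or_lt_of_le hs0 with h | h
    · subst h
      simp at hs
      rw [hs]
      exact left_mem_segment ℝ a b
    · -- s < 0 : a ∈ openSegment p b : contradiction
      exfalso
      have h1s : (0:ℝ) < 1 - s := by linarith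
      have h1s' : (1:ℝ) - s ≠ 0 := ne_of_gt h1s
      have hmem : a ∈ openSegment ℝ p b := by
        refine ⟨(1-s)⁻¹, -s * (1-s)⁻¹, inv_pos.mpr h1s,
          mul_pos (by linarith : (0:ℝ) < -s) (inv_pos.mpr h1s), by field_simp; ring, ?_⟩
        rw [hs]
        match_scalars <;> field_simp <;> ring
      exact not_openSegment_hull hconv ha hb hab.symm hp hmem
  · rcases le_or_gt s 1 with hs1 | hs1
    · exact ⟨1-s, s, by linarith, by linarith, by ring, hs.symm⟩
    · -- s > 1 : b ∈ openSegment p a : contradiction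
      exfalso
      have hspos : (0:ℝ) < s := by linarith
      have hsne : s ≠ 0 := ne_of_gt hspos
      have hmem : b ∈ openSegment ℝ p a := by
        refine ⟨s⁻¹, 1 - s⁻¹, inv_pos.mpr hspos, ?_, by ring, ?_⟩
        · rw [sub_pos]
          rw [inv_lt_one_iff₀]
          right; linarith
        · rw [hs]
          match_scalars <;> field_simp <;> ring
      exact not_openSegment_hull hconv hb ha hab hp hmem

/-- both points of P strictly on opposite sides of a chord of P: the segments cross -/
lemma straddle_segCross {P : Set Pt} (hconv : ConvexPosition P) {a b c d : Pt}
    (ha : a ∈ P) (hb : b ∈ P) (hc : c ∈ P) (hd : d ∈ P)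
    (hoc : 0 < o a b c) (hod : o a b d < 0) : SegCross a b c d := by
  have hab : a ≠ b := by
    rintro rfl
    have : o a a c = 0 := by simp [o]
    linarith
  have hca : c ≠ a := fun h => by rw [h, o_self2] at hoc; exact lt_irrefl _ hoc
  have hcb : c ≠ b := fun h => by rw [h, o_self3] at hoc; exact lt_irrefl _ hoc
  have hda : d ≠ a := fun h => by rw [h, o_self2] at hod; exact lt_irrefl _ hod
  have hdb : d ≠ b := fun h => by rw [h, o_self3] at hod; exact lt_irrefl _ hod
  have hcd : c ≠ d := fun h => by rw [h] at hoc; linarith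
  obtain ⟨p, hpseg, hp0⟩ := straddle_point hoc hod
  have hphull : p ∈ convexHull ℝ P :=
    segment_subset_convexHull hc hd (openSegment_subset_segment ℝ c d hpseg)
  have hpab : p ∈ segment ℝ a b := hull_inter_line hconv ha hb hab hphull hp0
  have hpa : p ≠ a := by
    rintro rfl
    exact not_openSegment_hull hconv ha hd hda (subset_convexHull ℝ P hc) hpseg
  have hpb : p ≠ b := by
    rintro rfl
    exact not_openSegment_hull hconv hb hd hdb (subset_convexHull ℝ P hc) hpseg
  exact ⟨p, mem_openSegment_of_ne_left_right hpa.symm hpb.symm hpab, hpseg⟩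

lemma o_sum (a b c x : Pt) : o x b c + o a x c + o a b x = o a b c := by
  simp only [o]; ring
lemma o_vec0 (a b c x : Pt) :
    o x b c * a 0 + o a x c * b 0 + o a b x * c 0 = o a b c * x 0 := by
  simp only [o]; ring
lemma o_vec1 (a b c x : Pt) :
    o x b c * a 1 + o a x c * b 1 + o a b x * c 1 = o a b c * x 1 := by
  simp only [o]; ring
lemma o_key_identity (a b x y : Pt) :
    o a x y * ((b 0 - a 0)^2 + (b 1 - a 1)^2) =
      o a b y * ((b 0 - a 0)*(x 0 - a 0) + (b 1 - a 1)*(x 1 - a 1))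
      - o a b x * ((b 0 - a 0)*(y 0 - a 0) + (b 1 - a 1)*(y 1 - a 1)) := by
  simp only [o]; ring

/-- the sign-juggling lemma: three rays from c cannot pairwise keep the others on one side -/
lemma sign_juggle {c p q r : Pt}
    (h1 : 0 < o c p q * o c p r) (h2 : 0 < o c q p * o c q r) (h3 : 0 < o c r p * o c r q) :
    False := by
  have e1 : o c p r = -o c r p := by rw [o_swap23]
  have e2 : o c q p = -o c p q := by rw [o_swap23]
  have e3 : o c r q = -o c q r := by rw [o_swap23]
  rw [e1] at h1
  rw [e2] at h2
  rw [e3] at h3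
  nlinarith [mul_pos (mul_pos h1 h2) h3, sq_nonneg (o c p q * o c q r * o c r p)]

/-- strict same-side-of-all-three-lines point is in the triangle hull -/
lemma mem_triangle {a b c x : Pt}
    (h1 : 0 < o a b x * o a b c) (h2 : 0 < o a x c * o a b c) (h3 : 0 < o x b c * o a b c) :
    x ∈ convexHull ℝ ({a, b, c} : Set Pt) := by
  have hD : o a b c ≠ 0 := by
    rintro h
    rw [h, mul_zero] at h1
    exact lt_irrefl _ h1
  set D := o a b c with hDdef
  set wa := o x b c / D with hwadef
  set wb := o a x c / D with hwbdef
  set wc := o a b x / D with hwcdef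
  have hwa : 0 < wa := by
    rcases mul_pos_iff.mp h3 with h | h
    · exact div_pos h.1 h.2
    · exact div_pos_of_neg_of_neg h.1 h.2
  have hwb : 0 < wb := by
    rcases mul_pos_iff.mp h2 with h | h
    · exact div_pos h.1 h.2
    · exact div_pos_of_neg_of_neg h.1 h.2
  have hwc : 0 < wc := by
    rcases mul_pos_iff.mp h1 with h | h
    · exact div_pos h.1 h.2
    · exact div_pos_of_neg_of_neg h.1 h.2
  have hsum : wa + wb + wc = 1 := by
    rw [hwadef, hwbdef, hwcdef, ← add_div, ← add_div, o_sum a b c x]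
    exact div_self hD
  have hxeq : x = wa • a + wb • b + wc • c := by
    ext i
    fin_cases i
    · show x 0 = (wa • a + wb • b + wc • c) 0
      simp only [PiLp.add_apply, PiLp.smul_apply, smul_eq_mul]
      rw [hwadef, hwbdef, hwcdef]
      field_simp
      rw [hDdef]
      linarith [o_vec0 a b c x]
    · show x 1 = (wa • a + wb • b + wc • c) 1
      simp only [PiLp.add_apply, PiLp.smul_apply, smul_eq_mul]
      rw [hwadef, hwbdef, hwcdef]
      field_simp
      rw [hDdef]
      linarith [o_vec1 a b c x]
  have h1wa : 1 - wa = wb + wc := by linarith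
  have h1wapos : 0 < 1 - wa := by linarith
  have h1wane : (1:ℝ) - wa ≠ 0 := ne_of_gt h1wapos
  set q : Pt := (wb/(1-wa)) • b + (wc/(1-wa)) • c with hqdef
  have hq : q ∈ convexHull ℝ ({a, b, c} : Set Pt) := by
    have : q ∈ segment ℝ b c :=
      ⟨wb/(1-wa), wc/(1-wa), le_of_lt (div_pos hwb h1wapos), le_of_lt (div_pos hwc h1wapos),
        by rw [← add_div, h1wa]; exact div_self (by linarith), rfl⟩
    refine segment_subset_convexHull ?_ ?_ this
    · simp
    · simp
  have hxq : x ∈ segment ℝ a q := by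
    refine ⟨wa, 1-wa, le_of_lt hwa, le_of_lt h1wapos, by ring, ?_⟩
    rw [hqdef, hxeq]
    match_scalars
    · ring
    · field_simp
    · field_simp
  have ha' : a ∈ convexHull ℝ ({a, b, c} : Set Pt) := subset_convexHull ℝ _ (by simp)
  exact (convex_convexHull ℝ _).segment_subset ha' hq hxq
end NCX

/-- For `n ≥ 4` points in convex position (`n` even), any family of pairwise
edge-disjoint plane perfect matchings on `P` that are additionally pairwise non-crossing
has size at most 2. -/

theorem convex_mutually_noncrossing_le_two (n k : ℕ) (hn : Even n) (h4 : 4 ≤ n)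
    (P : Set Pt) (hfin : P.Finite) (hcard : P.ncard = n) (hconv : ConvexPosition P)
    (M : Fin k → Set (Sym2 Pt))
    (hpm : ∀ i, IsPlaneMatch P (M i))
    (hdisj : ∀ i j, i ≠ j → Disjoint (M i) (M j))
    (hnc : ∀ i j, i ≠ j → ∀ e ∈ M i, ∀ f ∈ M j, ¬ EdgesCross e f) :
    k ≤ 2 := by
  classical
  by_contra hk
  push_neg at hk
  -- three distinct indices
  have h3k : 3 ≤ k := hk
  set i0 : Fin k := ⟨0, by omega⟩ with hi0
  set i1 : Fin k := ⟨1, by omega⟩ with hi1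
  set i2 : Fin k := ⟨2, by omega⟩ with hi2
  have h01 : i0 ≠ i1 := by simp [hi0, hi1, Fin.ext_iff]
  have h02 : i0 ≠ i2 := by simp [hi0, hi2, Fin.ext_iff]
  have h12 : i1 ≠ i2 := by simp [hi1, hi2, Fin.ext_iff]
  set G : Set (Sym2 Pt) := M i0 ∪ M i1 ∪ M i2 with hGdef
  have hMG : ∀ i, i = i0 ∨ i = i1 ∨ i = i2 → M i ⊆ G := by
    rintro i (rfl | rfl | rfl)
    · exact fun e he => Or.inl (Or.inl he)
    · exact fun e he => Or.inl (Or.inr he)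
    · exact fun e he => Or.inr he
  have hGidx : ∀ e ∈ G, ∃ i, (i = i0 ∨ i = i1 ∨ i = i2) ∧ e ∈ M i := by
    rintro e ((he | he) | he)
    · exact ⟨i0, Or.inl rfl, he⟩
    · exact ⟨i1, Or.inr (Or.inl rfl), he⟩
    · exact ⟨i2, Or.inr (Or.inr rfl), he⟩
  have hGedge : ∀ e ∈ G, ¬ e.IsDiag ∧ ∀ x ∈ e, x ∈ P := by
    intro e he
    obtain ⟨i, -, hei⟩ := hGidx e he
    exact (hpm i).1.1 e hei
  have hGnc : ∀ e ∈ G, ∀ f ∈ G, e ≠ f → ¬ EdgesCross e f := by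
    intro e he f hf hef
    obtain ⟨i, -, hei⟩ := hGidx e he
    obtain ⟨j, -, hfj⟩ := hGidx f hf
    rcases eq_or_ne i j with rfl | hij
    · exact (hpm i).2 hei hfj hef
    · exact hnc i j hij e hei f hfj
  -- every point of P has an M i - neighbour
  have getv : ∀ (i : Fin k), ∀ x ∈ P, ∃ y, y ∈ P ∧ y ≠ x ∧ s(x, y) ∈ M i := by
    intro i x hx
    obtain ⟨e, ⟨heM, hxe⟩, -⟩ := (hpm i).1.2 x hx
    obtain ⟨y, rfl⟩ := Sym2.mem_iff_exists.mp hxe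
    have hnd := ((hpm i).1.1 _ heM).1
    refine ⟨y, ((hpm i).1.1 _ heM).2 y (Sym2.mem_mk_right x y), ?_, heM⟩
    intro h
    exact hnd (Sym2.mk_isDiag_iff.mpr h.symm)
  -- degree three
  have hdeg3 : ∀ x ∈ P, ∃ y1 y2 y3 : Pt, y1 ≠ y2 ∧ y1 ≠ y3 ∧ y2 ≠ y3 ∧
      (y1 ∈ P ∧ y1 ≠ x ∧ s(x, y1) ∈ G) ∧ (y2 ∈ P ∧ y2 ≠ x ∧ s(x, y2) ∈ G) ∧
      (y3 ∈ P ∧ y3 ≠ x ∧ s(x, y3) ∈ G) := by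
    intro x hx
    obtain ⟨y1, hy1P, hy1x, hy1M⟩ := getv i0 x hx
    obtain ⟨y2, hy2P, hy2x, hy2M⟩ := getv i1 x hx
    obtain ⟨y3, hy3P, hy3x, hy3M⟩ := getv i2 x hx
    refine ⟨y1, y2, y3, ?_, ?_, ?_,
      ⟨hy1P, hy1x, hMG i0 (Or.inl rfl) hy1M⟩,
      ⟨hy2P, hy2x, hMG i1 (Or.inr (Or.inl rfl)) hy2M⟩,
      ⟨hy3P, hy3x, hMG i2 (Or.inr (Or.inr rfl)) hy3M⟩⟩
    · rintro rfl
      exact Set.disjoint_left.mp (hdisj i0 i1 h01) hy1M hy2M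
    · rintro rfl
      exact Set.disjoint_left.mp (hdisj i0 i2 h02) hy1M hy3M
    · rintro rfl
      exact Set.disjoint_left.mp (hdisj i1 i2 h12) hy2M hy3M
  -- the collection of oriented edges with nonempty positive side
  set W : Set (Pt × Pt) :=
    {q | s(q.1, q.2) ∈ G ∧ {x ∈ P | 0 < NCX.o q.1 q.2 x}.Nonempty} with hWdef
  have hWfin : W.Finite := by
    refine (hfin.prod hfin).subset ?_
    rintro ⟨p, q⟩ ⟨hpq, -⟩
    exact ⟨(hGedge _ hpq).2 p (Sym2.mem_mk_left p q), (hGedge _ hpq).2 q (Sym2.mem_mk_right p q)⟩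
  have hPne : P.Nonempty := Set.nonempty_of_ncard_ne_zero (by omega)
  have hWne : W.Nonempty := by
    obtain ⟨x0, hx0⟩ := hPne
    obtain ⟨y0, hy0P, hy0x, hy0M⟩ := getv i0 x0 hx0
    have hedge : s(x0, y0) ∈ G := hMG i0 (Or.inl rfl) hy0M
    have hz : (P \ {x0, y0}).Nonempty := by
      by_contra hcon
      rw [Set.not_nonempty_iff_eq_empty, Set.diff_eq_empty] at hcon
      have h2 : P.ncard ≤ 2 := by
        calc P.ncard ≤ ({x0, y0} : Set Pt).ncard := Set.ncard_le_ncard hcon (by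
          exact (Set.finite_singleton y0).insert x0)
        _ ≤ 2 := by
          refine le_trans (Set.ncard_insert_le x0 {y0}) ?_
          simp
      omega
    obtain ⟨z, hzP, hzne⟩ := hz
    simp only [Set.mem_insert_iff, Set.mem_singleton_iff, not_or] at hzne
    have ho := NCX.o_ne_zero hconv hx0 hy0P hzP (Ne.symm hy0x) (Ne.symm hzne.1) (Ne.symm hzne.2)
    rcases lt_or_gt_of_ne ho with h | h
    · refine ⟨(y0, x0), ?_, ⟨z, hzP, ?_⟩⟩
      · rw [Sym2.eq_swap]
        exact hedge
      · rw [NCX.o_swap12]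
        linarith
    · exact ⟨(x0, y0), hedge, ⟨z, hzP, h⟩⟩
  obtain ⟨⟨a, b⟩, hWab, hmin⟩ :=
    Set.exists_min_image W (fun q => {x ∈ P | 0 < NCX.o q.1 q.2 x}.ncard) hWfin hWne
  set S : Set Pt := {x ∈ P | 0 < NCX.o a b x} with hSdef
  have hSsubP : ∀ x, x ∈ S → x ∈ P := fun x hx => hx.1
  have hSfin : S.Finite := hfin.subset hSsubP
  have habG : s(a, b) ∈ G := hWab.1
  have hSne : S.Nonempty := hWab.2
  have hab : a ≠ b := by
    rintro rfl
    obtain ⟨x, -, hx⟩ := hSne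
    have : NCX.o a a x = 0 := by simp [NCX.o]
    linarith
  have haP : a ∈ P := (hGedge _ habG).2 a (Sym2.mem_mk_left a b)
  have hbP : b ∈ P := (hGedge _ habG).2 b (Sym2.mem_mk_right a b)
  have haS : a ∉ S := by
    intro h
    have := h.2
    rw [NCX.o_self2] at this
    exact lt_irrefl _ this
  have hbS : b ∉ S := by
    intro h
    have := h.2
    rw [NCX.o_self3] at this
    exact lt_irrefl _ this
  have hminS : ∀ p q : Pt, s(p, q) ∈ G → {x ∈ P | 0 < NCX.o p q x}.Nonempty →
      S.ncard ≤ {x ∈ P | 0 < NCX.o p q x}.ncard := by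
    intro p q h1 h2
    exact hmin (p, q) ⟨h1, h2⟩
  have hSa : ∀ x ∈ S, x ≠ a := fun x hx h => haS (h ▸ hx)
  have hSb : ∀ x ∈ S, x ≠ b := fun x hx h => hbS (h ▸ hx)
  have hneg : ∀ x ∈ P, x ∉ S → NCX.o a b x ≤ 0 := by
    intro x hxP hxS
    by_contra h
    exact hxS ⟨hxP, lt_of_not_ge h⟩
  -- Step 1 : neighbours of points of S stay in S ∪ {a, b}
  have step1 : ∀ c ∈ S, ∀ y, y ∈ P → y ≠ c → s(c, y) ∈ G → y = a ∨ y = b ∨ y ∈ S := by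
    intro c hcS y hyP hyc hyG
    by_contra hcon
    push_neg at hcon
    obtain ⟨hya, hyb, hyS⟩ := hcon
    have hyneg : NCX.o a b y < 0 :=
      lt_of_le_of_ne (hneg y hyP hyS)
        (NCX.o_ne_zero hconv haP hbP hyP hab (Ne.symm hya) (Ne.symm hyb))
    have hcross : SegCross a b c y :=
      NCX.straddle_segCross hconv haP hbP (hSsubP c hcS) hyP hcS.2 hyneg
    have hne : s(a, b) ≠ s(c, y) := by
      intro h
      rcases Sym2.eq_iff.mp h with ⟨h1, -⟩ | ⟨h1, -⟩
      · exact hSa c hcS h1.symm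
      · exact hya (h1.symm)
    exact hGnc _ habG _ hyG hne ⟨a, b, c, y, rfl, rfl, hcross⟩
  -- Step 3 : the far side of a chord of S is inside S
  have step3 : ∀ p q x : Pt, p ∈ S → (q ∈ S ∨ q = b) → x ∈ P →
      NCX.o p q x * NCX.o p q a < 0 → x ∈ S := by
    intro p q x hpS hq hxP hprod
    have hpP : p ∈ P := hSsubP p hpS
    have hqP : q ∈ P := by
      rcases hq with h | rfl
      · exact hSsubP q h
      · exact hbP
    have hopqx : NCX.o p q x ≠ 0 := fun h => by rw [h, zero_mul] at hprod; exact lt_irrefl _ hprod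
    have hopqa : NCX.o p q a ≠ 0 := fun h => by rw [h, mul_zero] at hprod; exact lt_irrefl _ hprod
    have hpq : p ≠ q := by
      rintro rfl
      exact hopqx (by simp [NCX.o])
    have hxq : x ≠ q := by
      rintro rfl
      exact hopqx (NCX.o_self3 p x)
    by_contra hxS
    have hxabneg : NCX.o a b x ≤ 0 := hneg x hxP hxS
    obtain ⟨r, hrseg, hr0⟩ : ∃ r ∈ openSegment ℝ a x, NCX.o p q r = 0 := by
      rcases mul_neg_iff.mp hprod with ⟨hpos, hnega⟩ | ⟨hnegx, hposa⟩
      · obtain ⟨r, hr1, hr2⟩ := NCX.straddle_point hpos hnega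
        rw [openSegment_symm] at hr1
        exact ⟨r, hr1, hr2⟩
      · obtain ⟨r, hr1, hr2⟩ := NCX.straddle_point hposa hnegx
        exact ⟨r, hr1, hr2⟩
    have hrhull : r ∈ convexHull ℝ P :=
      segment_subset_convexHull haP hxP (openSegment_subset_segment ℝ a x hrseg)
    have hrpq : r ∈ segment ℝ p q := NCX.hull_inter_line hconv hpP hqP hpq hrhull hr0
    obtain ⟨u, v, hu, hv, huv, hruv⟩ := hrpq
    have hoabr : NCX.o a b r = u * NCX.o a b p + v * NCX.o a b q := by
      rw [← hruv]
      exact NCX.o_affine a b p q u v huv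
    have hpSpos : 0 < NCX.o a b p := hpS.2
    have hqnonneg : 0 ≤ NCX.o a b q := by
      rcases hq with h | rfl
      · exact le_of_lt h.2
      · rw [NCX.o_self3]
    have hune : u ≠ 0 := by
      rintro rfl
      rw [zero_add] at huv
      subst huv
      rw [zero_smul, zero_add, one_smul] at hruv
      subst hruv
      exact NCX.not_openSegment_hull hconv hqP hxP hxq
        (subset_convexHull ℝ P haP) hrseg
    have hupos : 0 < u := lt_of_le_of_ne hu (Ne.symm hune)
    have hrpos : 0 < NCX.o a b r := by
      have h1 := mul_pos hupos hpSpos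
      have h2 := mul_nonneg hv hqnonneg
      rw [hoabr]
      linarith
    obtain ⟨α, β, hα, hβ, hαβ, hr2⟩ := hrseg
    have : NCX.o a b r = α * NCX.o a b a + β * NCX.o a b x := by
      rw [← hr2]
      exact NCX.o_affine a b a x α β hαβ
    rw [NCX.o_self2] at this
    have : NCX.o a b r ≤ 0 := by
      rw [this]
      have := mul_nonpos_of_nonneg_of_nonpos (le_of_lt hβ) hxabneg
      linarith
    linarith
  -- far side of an edge of G inside S is empty (minimality)
  have farEmpty : ∀ c d : Pt, c ∈ S → d ∈ S → c ≠ d → s(c, d) ∈ G →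
      ∀ x ∈ P, x ≠ c → x ≠ d → 0 < NCX.o c d x * NCX.o c d a := by
    intro c d hcS hdS hcd hG x hxP hxc hxd
    have hcP := hSsubP c hcS
    have hdP := hSsubP d hdS
    have hocda : NCX.o c d a ≠ 0 :=
      NCX.o_ne_zero hconv hcP hdP haP hcd (hSa c hcS) (hSa d hdS)
    have hocdx : NCX.o c d x ≠ 0 :=
      NCX.o_ne_zero hconv hcP hdP hxP hcd (Ne.symm hxc) (Ne.symm hxd)
    by_contra hcon
    have hprod : NCX.o c d x * NCX.o c d a < 0 :=
      lt_of_le_of_ne (le_of_not_gt hcon) (mul_ne_zero hocdx hocda)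
    have hxS : x ∈ S := step3 c d x hcS (Or.inl hdS) hxP hprod
    rcases lt_or_gt_of_ne hocda with hA | hA
    · -- a on negative side of (c,d) : far side is the positive side of (c,d)
      have hxpos : 0 < NCX.o c d x := by nlinarith
      have hsub : {y ∈ P | 0 < NCX.o c d y} ⊆ S := by
        rintro y ⟨hyP, hypos⟩
        exact step3 c d y hcS (Or.inl hdS) hyP (by nlinarith)
      have hss : {y ∈ P | 0 < NCX.o c d y} ⊂ S := by
        refine ⟨hsub, fun hSsub => ?_⟩
        have := (hSsub hcS).2
        rw [NCX.o_self2] at this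
        exact lt_irrefl _ this
      have hlt := Set.ncard_lt_ncard hss hSfin
      have hge := hminS c d hG ⟨x, hxP, hxpos⟩
      omega
    · -- a on positive side : far side is the positive side of (d,c)
      have hxpos : 0 < NCX.o d c x := by
        rw [NCX.o_swap12]
        nlinarith
      have hsub : {y ∈ P | 0 < NCX.o d c y} ⊆ S := by
        rintro y ⟨hyP, hypos⟩
        refine step3 c d y hcS (Or.inl hdS) hyP ?_
        rw [NCX.o_swap12] at hypos
        nlinarith
      have hss : {y ∈ P | 0 < NCX.o d c y} ⊂ S := by
        refine ⟨hsub, fun hSsub => ?_⟩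
        have := (hSsub hdS).2
        rw [NCX.o_self2] at this
        exact lt_irrefl _ this
      have hlt := Set.ncard_lt_ncard hss hSfin
      have hge := hminS d c (by rw [Sym2.eq_swap]; exact hG) ⟨x, hxP, hxpos⟩
      omega
  have pairSame : ∀ c d : Pt, c ∈ S → d ∈ S → c ≠ d → s(c, d) ∈ G →
      ∀ u v : Pt, u ∈ P → v ∈ P → u ≠ c → u ≠ d → v ≠ c → v ≠ d →
      0 < NCX.o c d u * NCX.o c d v := by
    intro c d hcS hdS hcd hG u v huP hvP huc hud hvc hvd
    have h1 := farEmpty c d hcS hdS hcd hG u huP huc hud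
    have h2 := farEmpty c d hcS hdS hcd hG v hvP hvc hvd
    nlinarith [mul_pos h1 h2, sq_nonneg (NCX.o c d a)]
  -- choose the angularly extreme point of S (as seen from a, relative to b)
  obtain ⟨c, hcS, hckey⟩ := Set.exists_min_image S
    (fun x => ((b 0 - a 0) * (x 0 - a 0) + (b 1 - a 1) * (x 1 - a 1)) / NCX.o a b x)
    hSfin hSne
  have hcP : c ∈ P := hSsubP c hcS
  have hKpos : 0 < (b 0 - a 0) ^ 2 + (b 1 - a 1) ^ 2 := by
    rcases NCX.coord_ne hab with h | h
    · have h1 : 0 < (b 0 - a 0) ^ 2 := lt_of_le_of_ne (sq_nonneg _) (Ne.symm (pow_ne_zero 2 h))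
      nlinarith [sq_nonneg (b 1 - a 1)]
    · have h1 : 0 < (b 1 - a 1) ^ 2 := lt_of_le_of_ne (sq_nonneg _) (Ne.symm (pow_ne_zero 2 h))
      nlinarith [sq_nonneg (b 0 - a 0)]
  have hext : ∀ x ∈ S, x ≠ c → NCX.o a c x < 0 := by
    intro x hxS hxc
    have hxP := hSsubP x hxS
    have hAc : 0 < NCX.o a b c := hcS.2
    have hAx : 0 < NCX.o a b x := hxS.2
    have hkeyle := hckey x hxS
    simp only at hkeyle
    have hineq : ((b 0 - a 0) * (c 0 - a 0) + (b 1 - a 1) * (c 1 - a 1)) * NCX.o a b x ≤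
        ((b 0 - a 0) * (x 0 - a 0) + (b 1 - a 1) * (x 1 - a 1)) * NCX.o a b c :=
      (div_le_div_iff₀ hAc hAx).mp hkeyle
    have hid := NCX.o_key_identity a b c x
    have hne : NCX.o a c x ≠ 0 :=
      NCX.o_ne_zero hconv haP hcP hxP (Ne.symm (hSa c hcS)) (Ne.symm (hSa x hxS)) (Ne.symm hxc)
    have hle : NCX.o a c x * ((b 0 - a 0) ^ 2 + (b 1 - a 1) ^ 2) ≤ 0 := by
      rw [hid]
      nlinarith [hineq]
    rcases lt_or_gt_of_ne hne with h | h
    · exact h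
    · exfalso
      nlinarith
  -- neighbours of c
  obtain ⟨y1, y2, y3, hy12, hy13, hy23, ⟨hy1P, hy1c, hy1G⟩, ⟨hy2P, hy2c, hy2G⟩,
    ⟨hy3P, hy3c, hy3G⟩⟩ := hdeg3 c hcP
  have hyloc : ∀ y, y ∈ P → y ≠ c → s(c, y) ∈ G → y = a ∨ y = b ∨ y ∈ S \ {c} := by
    intro y hyP hyc hyG
    rcases step1 c hcS y hyP hyc hyG with h | h | h
    · exact Or.inl h
    · exact Or.inr (Or.inl h)
    · exact Or.inr (Or.inr ⟨h, hyc⟩)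
  have hl1 := hyloc y1 hy1P hy1c hy1G
  have hl2 := hyloc y2 hy2P hy2c hy2G
  have hl3 := hyloc y3 hy3P hy3c hy3G
  -- case : S = {c}
  by_cases hScne : (S \ {c}).Nonempty
  swap
  · rw [Set.not_nonempty_iff_eq_empty] at hScne
    have hmem : ∀ y, y = a ∨ y = b ∨ y ∈ S \ {c} → y = a ∨ y = b := by
      intro y hy
      rcases hy with h | h | h
      · exact Or.inl h
      · exact Or.inr h
      · rw [hScne] at h
        exact absurd h (Set.notMem_empty y)
    have e1 := hmem y1 hl1
    have e2 := hmem y2 hl2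
    have e3 := hmem y3 hl3
    clear hl1 hl2 hl3 hy1G hy2G hy3G hy1c hy2c hy3c hy1P hy2P hy3P
    rcases e1 with rfl | rfl <;> rcases e2 with rfl | rfl <;> rcases e3 with rfl | rfl <;>
      first
        | exact hy12 rfl
        | exact hy13 rfl
        | exact hy23 rfl
  -- case : b is a neighbour of c
  have hbnb : (b = y1 ∨ b = y2 ∨ b = y3) → False := by
    intro hy
    have hbG : s(c, b) ∈ G := by
      rcases hy with h | h | h <;> rw [h]
      exacts [hy1G, hy2G, hy3G]
    have hcb : c ≠ b := hSb c hcS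
    have hocba : NCX.o c b a < 0 := by
      have h1 : NCX.o c b a = -NCX.o a b c := by
        rw [NCX.o_rot c b a, NCX.o_swap12 b a c]
      rw [h1]
      linarith [hcS.2]
    -- the positive side of (c,b) equals S \ {c}
    have hsub : {x ∈ P | 0 < NCX.o c b x} ⊆ S \ {c} := by
      rintro x ⟨hxP, hxpos⟩
      have hxS : x ∈ S := step3 c b x hcS (Or.inr rfl) hxP (by nlinarith)
      refine ⟨hxS, ?_⟩
      intro h
      rw [Set.mem_singleton_iff] at h
      subst h
      rw [NCX.o_self2] at hxpos
      exact lt_irrefl _ hxpos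
    have hsup : S \ {c} ⊆ {x ∈ P | 0 < NCX.o c b x} := by
      rintro x ⟨hxS, hxc⟩
      rw [Set.mem_singleton_iff] at hxc
      have hxP := hSsubP x hxS
      refine ⟨hxP, ?_⟩
      by_contra hcon
      have hxbne : NCX.o c b x ≠ 0 :=
        NCX.o_ne_zero hconv hcP hbP hxP hcb (Ne.symm hxc) (Ne.symm (hSb x hxS))
      have hxbneg : NCX.o c b x < 0 := lt_of_le_of_ne (le_of_not_gt hcon) hxbne
      -- x is in the triangle a b c : contradiction with convex position
      have htri : x ∈ convexHull ℝ ({a, b, c} : Set Pt) := by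
        refine NCX.mem_triangle ?_ ?_ ?_
        · exact mul_pos hxS.2 hcS.2
        · have h1 : NCX.o a x c = -NCX.o a c x := NCX.o_swap23 a x c
          have h2 := hext x hxS hxc
          rw [h1]
          have : 0 < -NCX.o a c x := by linarith
          exact mul_pos this hcS.2
        · have h1 : NCX.o x b c = -NCX.o c b x := by
            rw [NCX.o_rot x b c, NCX.o_rot b c x, NCX.o_swap23 c x b]  -- check
          rw [h1]
          have : 0 < -NCX.o c b x := by linarith
          exact mul_pos this hcS.2
      have hsubP : ({a, b, c} : Set Pt) ⊆ P \ {x} := by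
        rintro y (rfl | rfl | rfl)
        · exact ⟨haP, by simpa using Ne.symm (hSa x hxS)⟩
        · exact ⟨hbP, by simpa using Ne.symm (hSb x hxS)⟩
        · exact ⟨hcP, by simpa using Ne.symm hxc⟩
      exact hconv x hxP (convexHull_mono hsubP htri)
    have heq : {x ∈ P | 0 < NCX.o c b x} = S \ {c} := Set.Subset.antisymm hsub hsup
    have hne2 : {x ∈ P | 0 < NCX.o c b x}.Nonempty := by
      rw [heq]
      exact hScne
    have hge := hminS c b hbG hne2
    rw [heq] at hge
    have hss : S \ {c} ⊂ S := by
      refine ⟨Set.diff_subset, fun h => ?_⟩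
      have := h hcS
      simp at this
    have hlt := Set.ncard_lt_ncard hss hSfin
    omega
  have hbn1 : y1 ≠ b := fun h => hbnb (Or.inl h.symm)
  have hbn2 : y2 ≠ b := fun h => hbnb (Or.inr (Or.inl h.symm))
  have hbn3 : y3 ≠ b := fun h => hbnb (Or.inr (Or.inr h.symm))
  have hl1' : y1 = a ∨ y1 ∈ S \ {c} := by
    rcases hl1 with h | h | h
    exacts [Or.inl h, absurd h hbn1, Or.inr h]
  have hl2' : y2 = a ∨ y2 ∈ S \ {c} := by
    rcases hl2 with h | h | h
    exacts [Or.inl h, absurd h hbn2, Or.inr h]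
  have hl3' : y3 = a ∨ y3 ∈ S \ {c} := by
    rcases hl3 with h | h | h
    exacts [Or.inl h, absurd h hbn3, Or.inr h]
  -- extract two S-neighbours d, d' and a third neighbour t
  obtain ⟨d, d', t, hdS', hd'S', hdd', htd, htd', hdG, hd'G, htG, htloc⟩ :
      ∃ d d' t : Pt, d ∈ S \ {c} ∧ d' ∈ S \ {c} ∧ d ≠ d' ∧ t ≠ d ∧ t ≠ d' ∧
        s(c, d) ∈ G ∧ s(c, d') ∈ G ∧ s(c, t) ∈ G ∧ (t = a ∨ t ∈ S \ {c}) := by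
    rcases hl1' with h1 | h1
    · -- y1 = a, so y2, y3 ∈ S \ {c}
      have h2 : y2 ∈ S \ {c} := by
        rcases hl2' with h | h
        · exact absurd (h1.trans h.symm) hy12
        · exact h
      have h3 : y3 ∈ S \ {c} := by
        rcases hl3' with h | h
        · exact absurd (h1.trans h.symm) hy13
        · exact h
      exact ⟨y2, y3, y1, h2, h3, hy23, hy12, hy13, hy2G, hy3G, hy1G, Or.inl h1⟩
    · rcases hl2' with h2 | h2
      · have h3 : y3 ∈ S \ {c} := by
          rcases hl3' with h | h
          · exact absurd (h2.trans h.symm) hy23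
          · exact h
        exact ⟨y1, y3, y2, h1, h3, hy13, hy12.symm, hy23, hy1G, hy3G, hy2G, Or.inl h2⟩
      · exact ⟨y1, y2, y3, h1, h2, hy12, hy13.symm, hy23.symm, hy1G, hy2G, hy3G, hl3'⟩
  have hdS : d ∈ S := hdS'.1
  have hd'S : d' ∈ S := hd'S'.1
  have hdc : d ≠ c := by simpa using hdS'.2
  have hd'c : d' ≠ c := by simpa using hd'S'.2
  have hdP : d ∈ P := hSsubP d hdS
  have hd'P : d' ∈ P := hSsubP d' hd'S
  have htP : t ∈ P := by
    rcases htloc with h | h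
    · rw [h]
      exact haP
    · exact hSsubP t h.1
  have htc : t ≠ c := by
    rcases htloc with h | h
    · rw [h]
      exact Ne.symm (hSa c hcS)
    · simpa using h.2
  -- none of the three lines from c separates the other two neighbours
  have line_d : 0 < NCX.o c d d' * NCX.o c d t :=
    pairSame c d hcS hdS (Ne.symm hdc) hdG d' t hd'P htP hd'c hdd'.symm htc htd
  have line_d' : 0 < NCX.o c d' d * NCX.o c d' t :=
    pairSame c d' hcS hd'S (Ne.symm hd'c) hd'G d t hdP htP hdc hdd' htc htd'
  have line_t : 0 < NCX.o c t d * NCX.o c t d' := by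
    rcases htloc with h | h
    · rw [h]
      have h1 : 0 < NCX.o c a d := by
        have h2 := hext d hdS hdc
        have h3 : NCX.o c a d = -NCX.o a c d := NCX.o_swap12 c a d
        rw [h3]
        linarith
      have h1' : 0 < NCX.o c a d' := by
        have h2 := hext d' hd'S hd'c
        have h3 : NCX.o c a d' = -NCX.o a c d' := NCX.o_swap12 c a d'
        rw [h3]
        linarith
      exact mul_pos h1 h1'
    · exact pairSame c t hcS h.1 (Ne.symm htc) htG d d' hdP hd'P hdc (Ne.symm htd)
        hd'c (Ne.symm htd')
  exact NCX.sign_juggle line_d line_d' line_t
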